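/- Let p ≥ 2. A graph G is a [p+2, p]-graph if every induced subgraph of G on p+2 vertices has at least p edges. If G is a triangle-free [p+2, p]-graph of order n ≥ 2p+3 with minimum degree at least p, then G is p-regular. -/

import Mathlib

open SimpleGraph

/-- A graph `G` is an `[s,t]`-graph if every induced subgraph of order `s` has at least
`t` edges. -/
def IsSTGraph {V : Type*} [Fintype V] [DecidableEq V] (G : SimpleGraph V) [DecidableRel G.Adj]
    (s t : ℕ) : Prop :=
  ∀ S : Finset V, S.card = s → t ≤ (G.induce (S : Set V)).edgeFinset.card

/-- a triangle-free `[p+2, p]`-graph of order `n ≥ 2p+3` with minimum degree at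
least `p ≥ 2` is `p`-regular. -/
theorem triangle_free_st_graph_regular {V : Type*} [Fintype V] [DecidableEq V]
    (G : SimpleGraph V) [DecidableRel G.Adj] (p n : ℕ) (hp : 2 ≤ p)
    (horder : Fintype.card V = n) (hn : 2 * p + 3 ≤ n)
    (hst : IsSTGraph G (p + 2) p) (htf : G.CliqueFree 3)
    (hdeg : p ≤ G.minDegree) :
    G.IsRegularOfDegree p := by
  classical
  -- triangle-free: neighborhoods are independent
  have htri : ∀ v a b : V, G.Adj v a → G.Adj v b → ¬ G.Adj a b := by
    intro v a b hva hvb hab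
    exact htf {v, a, b} (is3Clique_triple_iff.2 ⟨hva, hvb, hab⟩)
  -- any set of p+2 vertices contains an edge
  have hno : ∀ S : Finset V, S.card = p + 2 → ∃ a ∈ S, ∃ b ∈ S, G.Adj a b := by
    intro S hS
    by_contra h
    push_neg at h
    have h1 := hst S hS
    have h2 : (G.induce (S : Set V)).edgeFinset = ∅ := by
      apply Finset.eq_empty_of_forall_notMem
      refine Sym2.ind (fun a b hab => ?_)
      rw [mem_edgeFinset, mem_edgeSet] at hab
      exact h a a.2 b b.2 hab
    rw [h2] at h1
    simp at h1
    omega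
  -- degree upper bound
  have hub : ∀ v : V, G.degree v ≤ p + 1 := by
    intro v
    by_contra hv
    push_neg at hv
    have hcard : p + 2 ≤ (G.neighborFinset v).card := by
      rwa [card_neighborFinset_eq_degree]
    obtain ⟨S, hSsub, hScard⟩ := Finset.exists_subset_card_eq hcard
    obtain ⟨a, ha, b, hb, hab⟩ := hno S hScard
    exact htri v a b ((mem_neighborFinset G v a).1 (hSsub ha))
      ((mem_neighborFinset G v b).1 (hSsub hb)) hab
  intro v
  have hlow : p ≤ G.degree v := le_trans hdeg (G.minDegree_le_degree v)
  by_contra hne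
  have hdv : G.degree v = p + 1 := by have := hub v; omega
  set N := G.neighborFinset v with hN
  have hNcard : N.card = p + 1 := by rw [hN, card_neighborFinset_eq_degree]; exact hdv
  have hvN : v ∉ N := by simp [hN]
  -- every vertex outside {v} ∪ N has at least p neighbors in N
  have key : ∀ u : V, u ∉ N → u ≠ v → p ≤ (N ∩ G.neighborFinset u).card := by
    intro u huN huv
    set S : Finset V := insert u N with hS
    have hScard : S.card = p + 2 := by
      rw [hS, Finset.card_insert_of_notMem huN, hNcard]
    have huS : u ∈ S := Finset.mem_insert_self u N
    set u' : (S : Set V) := ⟨u, by exact_mod_cast huS⟩ with hu'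
    have hsub : (G.induce (S : Set V)).edgeFinset ⊆
        ((G.induce (S : Set V)).neighborFinset u').image (fun w => s(u', w)) := by
      refine Sym2.ind (fun a b hab => ?_) 
      rw [mem_edgeFinset, mem_edgeSet] at hab
      have hab' : G.Adj (a : V) (b : V) := hab
      have hmem : (a : V) = u ∨ (b : V) = u := by
        by_contra hc
        push_neg at hc
        have haN : (a : V) ∈ N := by
          rcases Finset.mem_insert.1 (Finset.mem_coe.1 a.2) with h' | h'
          · exact absurd h' hc.1
          · exact h'
        have hbN : (b : V) ∈ N := by
          rcases Finset.mem_insert.1 (Finset.mem_coe.1 b.2) with h' | h'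
          · exact absurd h' hc.2
          · exact h'
        exact htri v a b ((mem_neighborFinset G v a).1 haN)
          ((mem_neighborFinset G v b).1 hbN) hab'
      rcases hmem with h' | h'
      · have ha : a = u' := Subtype.ext h'
        subst ha
        refine Finset.mem_image.2 ⟨b, ?_, rfl⟩
        rwa [mem_neighborFinset]
      · have hb : b = u' := Subtype.ext h'
        subst hb
        refine Finset.mem_image.2 ⟨a, ?_, ?_⟩
        · rw [mem_neighborFinset]; exact hab.symm
        · exact Sym2.eq_swap
    have h3 : p ≤ ((G.induce (S : Set V)).neighborFinset u').card := by
      calc p ≤ (G.induce (S : Set V)).edgeFinset.card := hst S hScard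
        _ ≤ (((G.induce (S : Set V)).neighborFinset u').image (fun w => s(u', w))).card :=
            Finset.card_le_card hsub
        _ ≤ ((G.induce (S : Set V)).neighborFinset u').card := Finset.card_image_le
    have h4 : ((G.induce (S : Set V)).neighborFinset u').card ≤ (N ∩ G.neighborFinset u).card := by
      refine Finset.card_le_card_of_injOn (fun w => (w : V)) ?_ ?_
      · intro w hw
        rw [Finset.mem_coe, mem_neighborFinset] at hw
        have hadj : G.Adj u (w : V) := hw
        have hwu : (w : V) ≠ u := fun h => (G.irrefl (h ▸ hadj))
        have hwN : (w : V) ∈ N := by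
          rcases Finset.mem_insert.1 (Finset.mem_coe.1 w.2) with h' | h'
          · exact absurd h' hwu
          · exact h'
        exact Finset.mem_inter.2 ⟨hwN, (mem_neighborFinset G u w).2 hadj⟩
      · exact Subtype.val_injective.injOn
    omega
  -- the set of vertices outside {v} ∪ N together with v is independent and large
  set T : Finset V := Finset.univ \ insert v N with hT
  have hTcard : T.card = n - (p + 2) := by
    rw [hT, Finset.card_sdiff_of_subset (Finset.subset_univ _), Finset.card_insert_of_notMem hvN,
      hNcard, Finset.card_univ, horder]
  have hvT : v ∉ T := by simp [hT]
  have hbig : p + 2 ≤ (insert v T).card := by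
    rw [Finset.card_insert_of_notMem hvT, hTcard]
    omega
  obtain ⟨S, hSsub, hScard⟩ := Finset.exists_subset_card_eq hbig
  obtain ⟨a, ha, b, hb, hab⟩ := hno S hScard
  have hmem : ∀ x ∈ S, x = v ∨ (x ∉ N ∧ x ≠ v) := by
    intro x hx
    rcases Finset.mem_insert.1 (hSsub hx) with h' | h'
    · exact Or.inl h'
    · right
      rw [hT, Finset.mem_sdiff, Finset.mem_insert] at h'
      push_neg at h'
      exact ⟨h'.2.2, h'.2.1⟩
  rcases hmem a ha with rfl | ⟨haN, hav⟩
  · rcases hmem b hb with rfl | ⟨hbN, hbv⟩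
    · exact G.irrefl hab
    · exact hbN ((mem_neighborFinset G a b).2 hab)
  · rcases hmem b hb with rfl | ⟨hbN, hbv⟩
    · exact haN ((mem_neighborFinset G b a).2 hab.symm)
    · -- a, b both outside, adjacent: common neighbor in N gives a triangle
      have hka := key a haN hav
      have hkb := key b hbN hbv
      have hinter : ((N ∩ G.neighborFinset a) ∩ (N ∩ G.neighborFinset b)).Nonempty := by
        by_contra hc
        rw [Finset.not_nonempty_iff_eq_empty] at hc
        have hdisj : Disjoint (N ∩ G.neighborFinset a) (N ∩ G.neighborFinset b) :=
          Finset.disjoint_iff_inter_eq_empty.2 hc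
        have hunion : ((N ∩ G.neighborFinset a) ∪ (N ∩ G.neighborFinset b)).card
            = (N ∩ G.neighborFinset a).card + (N ∩ G.neighborFinset b).card :=
          Finset.card_union_of_disjoint hdisj
        have hsubN : (N ∩ G.neighborFinset a) ∪ (N ∩ G.neighborFinset b) ⊆ N := by
          intro x hx
          rcases Finset.mem_union.1 hx with h' | h' <;>
            exact (Finset.mem_inter.1 h').1
        have := Finset.card_le_card hsubN
        omega
      obtain ⟨x, hx⟩ := hinter
      rw [Finset.mem_inter, Finset.mem_inter, Finset.mem_inter] at hx
      have hax : G.Adj a x := (mem_neighborFinset G a x).1 hx.1.2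
      have hbx : G.Adj b x := (mem_neighborFinset G b x).1 hx.2.2
      exact htri a b x hab hax hbx
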